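/- Let η : ℝ³ → ℝ³ be the axial rotation Killing field η(x) = (−x₂, x₁, 0), with squared norm λ(x) = x₁² + x₂², and let U = {x ∈ ℝ³ : x₁² + x₂² ≠ 0}. Let S : U → ℝ³ be a C¹ vector field satisfying: (i) ⟨S(x), η(x)⟩ = 0 for all x ∈ U; (ii) ∑_{a=1}^{3} ∂_a S_a(x) = 0 for all x ∈ U (S is divergence-free); (iii) the Lie bracket [η, S] vanishes, i.e. ∑_b η_b(x) ∂_b S_a(x) − ∑_b S_b(x) ∂_b η_a(x) = 0 for all x ∈ U and all a. Define Ψ(x)_{ab} = (1/λ(x)) (S_a(x) η_b(x) + S_b(x) η_a(x)). Then Ψ(x) is symmetric and trace-free for every x ∈ U, and Ψ is divergence-free with respect to the flat metric: ∑_{a=1}^{3} ∂_a Ψ_{ab}(x) = 0 for all x ∈ U and all b. -/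

import Mathlib

/-- The axial rotation Killing field `η(x) = (−x₂, x₁, 0)` on `ℝ³`. -/
def axialEta (x : Fin 3 → ℝ) : Fin 3 → ℝ := ![-(x 1), x 0, 0]

/-- The squared norm `λ(x) = x₁² + x₂²` of the axial Killing field. -/
def axialLam (x : Fin 3 → ℝ) : ℝ := x 0 ^ 2 + x 1 ^ 2

/-- The complement of the symmetry axis: `U = {x ∈ ℝ³ : x₁² + x₂² ≠ 0}`. -/
def axialU : Set (Fin 3 → ℝ) := {x | x 0 ^ 2 + x 1 ^ 2 ≠ 0}

lemma axialU_open : IsOpen axialU := by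
  have h : axialU = (fun x : Fin 3 → ℝ => x 0 ^ 2 + x 1 ^ 2) ⁻¹' ({0}ᶜ) := rfl
  rw [h]
  exact isOpen_compl_singleton.preimage (by fun_prop)

lemma hasFDerivAt_coord (x : Fin 3 → ℝ) (i : Fin 3) :
    HasFDerivAt (fun y : Fin 3 → ℝ => y i)
      (ContinuousLinearMap.proj i : (Fin 3 → ℝ) →L[ℝ] ℝ) x :=
  (ContinuousLinearMap.proj (R := ℝ) (φ := fun _ : Fin 3 => ℝ) i).hasFDerivAt

noncomputable def etaD' : Fin 3 → ((Fin 3 → ℝ) →L[ℝ] ℝ)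
  | 0 => -(ContinuousLinearMap.proj 1)
  | 1 => ContinuousLinearMap.proj 0
  | 2 => 0

lemma hasEta (x : Fin 3 → ℝ) (j : Fin 3) :
    HasFDerivAt (fun y => axialEta y j) (etaD' j) x := by
  fin_cases j
  · show HasFDerivAt (fun y => axialEta y 0) (etaD' 0) x
    have he : (fun y : Fin 3 → ℝ => axialEta y 0) = fun y => -(y 1) := by
      funext y; simp [axialEta]
    rw [he]; exact (hasFDerivAt_coord x 1).neg
  · simpa [axialEta, etaD'] using hasFDerivAt_coord x 0
  · show HasFDerivAt (fun y => axialEta y 2) (etaD' 2) x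
    have h := hasFDerivAt_const (𝕜 := ℝ) (0:ℝ) x
    have he : (fun y : Fin 3 → ℝ => axialEta y 2) = fun _ => (0:ℝ) := by
      funext y; simp [axialEta]
    have hd : etaD' 2 = (0 : (Fin 3 → ℝ) →L[ℝ] ℝ) := rfl
    rw [he, hd]; exact h

def etaD : Fin 3 → Fin 3 → ℝ
  | 0 => ![0,-1,0]
  | 1 => ![1,0,0]
  | 2 => ![0,0,0]

lemma fderiv_eta_apply (x : Fin 3 → ℝ) (j a : Fin 3) :
    fderiv ℝ (fun y => axialEta y j) x (Pi.single a 1) = etaD j a := by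
  rw [(hasEta x j).fderiv]
  fin_cases j <;> fin_cases a <;>
    simp [etaD', etaD, ContinuousLinearMap.proj_apply]

noncomputable def lamD (x : Fin 3 → ℝ) : (Fin 3 → ℝ) →L[ℝ] ℝ :=
  (2 * x 0) • ContinuousLinearMap.proj 0 + (2 * x 1) • ContinuousLinearMap.proj 1

lemma hasLam (x : Fin 3 → ℝ) : HasFDerivAt axialLam (lamD x) x := by
  have h := ((hasFDerivAt_coord x 0).mul (hasFDerivAt_coord x 0)).add
    ((hasFDerivAt_coord x 1).mul (hasFDerivAt_coord x 1))
  have he : axialLam = fun y : Fin 3 → ℝ => y 0 * y 0 + y 1 * y 1 := by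
    funext y; simp [axialLam]; ring
  rw [he]
  refine h.congr_fderiv ?_
  unfold lamD
  ext v
  simp [ContinuousLinearMap.proj_apply]
  ring

/-- The axially symmetric tensor `Ψ_{ab} = (1/λ)(S_a η_b + S_b η_a)` built from a
source vector field `S`. -/
noncomputable def axialPsi (S : (Fin 3 → ℝ) → Fin 3 → ℝ) (x : Fin 3 → ℝ) :
    Matrix (Fin 3) (Fin 3) ℝ :=
  fun a b => (1 / axialLam x) * (S x a * axialEta x b + S x b * axialEta x a)

def lamDv (x : Fin 3 → ℝ) : Fin 3 → ℝ := ![2 * x 0, 2 * x 1, 0]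

lemma key (S : (Fin 3 → ℝ) → Fin 3 → ℝ) (x : Fin 3 → ℝ)
    (hx : axialLam x ≠ 0)
    (hSd : ∀ i : Fin 3, DifferentiableAt ℝ (fun y => S y i) x)
    (i j a : Fin 3) :
    fderiv ℝ (fun y => axialPsi S y i j) x (Pi.single a 1) =
      -(axialLam x ^ 2)⁻¹ * lamDv x a *
          (S x i * axialEta x j + S x j * axialEta x i) +
        (axialLam x)⁻¹ *
          (fderiv ℝ (fun y => S y i) x (Pi.single a 1) * axialEta x j +
            S x i * etaD j a +
            fderiv ℝ (fun y => S y j) x (Pi.single a 1) * axialEta x i +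
            S x j * etaD i a) := by
  have h3 := ((hasDerivAt_inv hx).comp_hasFDerivAt x (hasLam x)).mul
    ((((hSd i).hasFDerivAt).mul (hasEta x j)).add
      (((hSd j).hasFDerivAt).mul (hasEta x i)))
  simp only [Function.comp_def, Pi.mul_def, Pi.add_def] at h3
  rw [show (fun y => (axialLam y)⁻¹ *
        (S y i * axialEta y j + S y j * axialEta y i)) =
      (fun y => axialPsi S y i j) from by
    funext y; simp [axialPsi, one_div]] at h3
  rw [h3.fderiv]
  have hlam : lamD x (Pi.single a 1) = lamDv x a := by
    unfold lamD lamDv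
    fin_cases a <;> simp [ContinuousLinearMap.proj_apply]
  have heta : ∀ k : Fin 3, etaD' k (Pi.single a 1) = etaD k a := by
    intro k; fin_cases k <;> fin_cases a <;>
      simp [etaD', etaD, ContinuousLinearMap.proj_apply]
  simp only [ContinuousLinearMap.add_apply, ContinuousLinearMap.coe_smul',
    Pi.smul_apply, smul_eq_mul, ContinuousLinearMap.neg_apply, hlam, heta]
  ring

lemma key' (S : (Fin 3 → ℝ) → Fin 3 → ℝ) (x : Fin 3 → ℝ)
    (hx : axialLam x ≠ 0)
    (hSd : ∀ i : Fin 3, DifferentiableAt ℝ (fun y => S y i) x)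
    (i j a : Fin 3) :
    (x 0 ^ 2 + x 1 ^ 2) ^ 2 * fderiv ℝ (fun y => axialPsi S y i j) x (Pi.single a 1) =
      -(lamDv x a) * (S x i * axialEta x j + S x j * axialEta x i) +
        (x 0 ^ 2 + x 1 ^ 2) *
          (fderiv ℝ (fun y => S y i) x (Pi.single a 1) * axialEta x j +
            S x i * etaD j a +
            fderiv ℝ (fun y => S y j) x (Pi.single a 1) * axialEta x i +
            S x j * etaD i a) := by
  rw [key S x hx hSd i j a]
  have hL' : x 0 ^ 2 + x 1 ^ 2 ≠ 0 := hx
  have hlam : axialLam x = x 0 ^ 2 + x 1 ^ 2 := rfl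
  rw [hlam]
  field_simp

/-- If a `C¹` vector field `S` on `U` is orthogonal to the axial Killing field `η`,
divergence-free, and has vanishing Lie bracket with `η`, then the tensor
`Ψ_{ab} = (1/λ)(S_a η_b + S_b η_a)` is symmetric, trace-free and divergence-free with
respect to the flat metric on `U`. -/
theorem axialPsi_symm_traceFree_divergenceFree
    (S : (Fin 3 → ℝ) → Fin 3 → ℝ) (hS : ContDiffOn ℝ 1 S axialU)
    (horth : ∀ x ∈ axialU, ∑ a : Fin 3, S x a * axialEta x a = 0)
    (hdiv : ∀ x ∈ axialU,
      ∑ a : Fin 3, fderiv ℝ (fun y => S y a) x (Pi.single a 1) = 0)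
    (hlie : ∀ x ∈ axialU, ∀ a : Fin 3,
      (∑ b : Fin 3, axialEta x b * fderiv ℝ (fun y => S y a) x (Pi.single b 1)) -
        (∑ b : Fin 3, S x b * fderiv ℝ (fun y => axialEta y a) x (Pi.single b 1)) = 0) :
    (∀ x ∈ axialU, ∀ a b : Fin 3, axialPsi S x a b = axialPsi S x b a) ∧
      (∀ x ∈ axialU, ∑ a : Fin 3, axialPsi S x a a = 0) ∧
      (∀ x ∈ axialU, ∀ b : Fin 3,
        ∑ a : Fin 3, fderiv ℝ (fun y => axialPsi S y a b) x (Pi.single a 1) = 0) := by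
  refine ⟨?_, ?_, ?_⟩
  · intro x _ a b
    simp only [axialPsi]
    ring
  · intro x hx
    have h := horth x hx
    simp only [Fin.sum_univ_three, axialPsi] at h ⊢
    have hL : axialLam x ≠ 0 := hx
    field_simp
    linear_combination 2 * h
  · intro x hx b
    have hL : axialLam x ≠ 0 := hx
    have hSd : ∀ i : Fin 3, DifferentiableAt ℝ (fun y => S y i) x := by
      have hd : DifferentiableAt ℝ S x :=
        ((hS.differentiableOn one_ne_zero) x hx).differentiableAt
          (axialU_open.mem_nhds hx)
      exact fun i => differentiableAt_pi.1 hd i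
    have ho := horth x hx
    have hd := hdiv x hx
    have hl0 := hlie x hx 0
    have hl1 := hlie x hx 1
    have hl2 := hlie x hx 2
    simp only [Fin.sum_univ_three, fderiv_eta_apply] at ho hd hl0 hl1 hl2
    simp only [axialEta, etaD, Matrix.cons_val_zero, Matrix.cons_val_one,
      Matrix.head_cons, Matrix.cons_val_two, Matrix.tail_cons] at ho hl0 hl1 hl2
    have goal0 : ∑ a : Fin 3,
        fderiv ℝ (fun y => axialPsi S y a 0) x (Pi.single a 1) = 0 := by
      have hL' : x 0 ^ 2 + x 1 ^ 2 ≠ 0 := hx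
      have h0 : (x 0 ^ 2 + x 1 ^ 2) ^ 2 * (∑ a : Fin 3,
          fderiv ℝ (fun y => axialPsi S y a 0) x (Pi.single a 1)) = 0 := by
        rw [Fin.sum_univ_three, mul_add, mul_add, key' S x hL hSd, key' S x hL hSd,
          key' S x hL hSd]
        simp only [axialEta, etaD, lamDv, Matrix.cons_val_zero, Matrix.cons_val_one,
          Matrix.head_cons, Matrix.cons_val_two, Matrix.tail_cons]
        linear_combination (-(x 1) * (x 0 ^ 2 + x 1 ^ 2)) * hd + (x 0 ^ 2 + x 1 ^ 2) * hl0 + (-2 * x 0) * ho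
      rcases mul_eq_zero.mp h0 with h | h
      · exact absurd h (pow_ne_zero 2 hL')
      · exact h
    have goal1 : ∑ a : Fin 3,
        fderiv ℝ (fun y => axialPsi S y a 1) x (Pi.single a 1) = 0 := by
      have hL' : x 0 ^ 2 + x 1 ^ 2 ≠ 0 := hx
      have h0 : (x 0 ^ 2 + x 1 ^ 2) ^ 2 * (∑ a : Fin 3,
          fderiv ℝ (fun y => axialPsi S y a 1) x (Pi.single a 1)) = 0 := by
        rw [Fin.sum_univ_three, mul_add, mul_add, key' S x hL hSd, key' S x hL hSd,
          key' S x hL hSd]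
        simp only [axialEta, etaD, lamDv, Matrix.cons_val_zero, Matrix.cons_val_one,
          Matrix.head_cons, Matrix.cons_val_two, Matrix.tail_cons]
        linear_combination (x 0 * (x 0 ^ 2 + x 1 ^ 2)) * hd + (x 0 ^ 2 + x 1 ^ 2) * hl1 + (-2 * x 1) * ho
      rcases mul_eq_zero.mp h0 with h | h
      · exact absurd h (pow_ne_zero 2 hL')
      · exact h
    have goal2 : ∑ a : Fin 3,
        fderiv ℝ (fun y => axialPsi S y a 2) x (Pi.single a 1) = 0 := by
      have hL' : x 0 ^ 2 + x 1 ^ 2 ≠ 0 := hx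
      have h0 : (x 0 ^ 2 + x 1 ^ 2) ^ 2 * (∑ a : Fin 3,
          fderiv ℝ (fun y => axialPsi S y a 2) x (Pi.single a 1)) = 0 := by
        rw [Fin.sum_univ_three, mul_add, mul_add, key' S x hL hSd, key' S x hL hSd,
          key' S x hL hSd]
        simp only [axialEta, etaD, lamDv, Matrix.cons_val_zero, Matrix.cons_val_one,
          Matrix.head_cons, Matrix.cons_val_two, Matrix.tail_cons]
        linear_combination (x 0 ^ 2 + x 1 ^ 2) * hl2
      rcases mul_eq_zero.mp h0 with h | h
      · exact absurd h (pow_ne_zero 2 hL')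
      · exact h
    fin_cases b
    · exact goal0
    · exact goal1
    · exact goal2
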